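/- For each □ ∈ {K, D}, every finite simplicial model M over a finite set At of atomic propositions, every facet X of M, and every n ∈ ℕ: M, X ⊭ Φ^□_M(n, X). -/

import Mathlib

/-- A simplicial model: a pure chromatic simplicial complex, colored by the
agents in `Agent`, whose vertices are labeled by sets of atomic propositions.
Each atomic proposition belongs to an agent (`agentOf`), and the label of a
vertex only contains atoms of the color of that vertex. -/
structure SimplicialModel (Agent Atom Vertex : Type) [Fintype Agent]
    [DecidableEq Vertex] where
  simplices : Set (Finset Vertex)
  chi : Vertex → Agent
  label : Vertex → Set Atom
  agentOf : Atom → Agent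
  simplex_nonempty : ∀ X ∈ simplices, X.Nonempty
  down_closed : ∀ X ∈ simplices, ∀ Y : Finset Vertex, Y ⊆ X → Y.Nonempty → Y ∈ simplices
  chi_injOn : ∀ X ∈ simplices, Set.InjOn chi ↑X
  pure : ∀ X ∈ simplices, ∃ F ∈ simplices, X ⊆ F ∧ F.card = Fintype.card Agent
  label_agent : ∀ v, ∀ p ∈ label v, agentOf p = chi v

namespace SimplicialModel

variable {Agent Atom Vertex Vertex' : Type} [Fintype Agent]
  [DecidableEq Vertex] [DecidableEq Vertex']

/-- The facets (maximal simplices) of a simplicial model: the simplices with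
exactly `|Agent|` vertices. -/
def facets (M : SimplicialModel Agent Atom Vertex) : Set (Finset Vertex) :=
  {X ∈ M.simplices | X.card = Fintype.card Agent}

/-- The type of facets of a simplicial model. -/
def Facet (M : SimplicialModel Agent Atom Vertex) : Type := {X : Finset Vertex // X ∈ M.facets}

/-- The labeling of a facet: union of the labels of its vertices. -/
def flabel (M : SimplicialModel Agent Atom Vertex) (X : M.Facet) : Set Atom :=
  ⋃ v ∈ (X.1 : Finset Vertex), M.label v

/-- `χ(X ∩ Y)`: the set of colors of the common vertices of two facets. -/
def chiInter (M : SimplicialModel Agent Atom Vertex) (X Y : M.Facet) : Set Agent :=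
  M.chi '' ↑(X.1 ∩ Y.1)

/-- The indistinguishability relation `X ∼ₐ Y` : `a ∈ χ(X ∩ Y)`. -/
def indist (M : SimplicialModel Agent Atom Vertex) (a : Agent) (X Y : M.Facet) : Prop :=
  a ∈ M.chiInter X Y

/-- A morphism of simplicial models: maps simplices to simplices, preserves
colors and preserves labels. -/
def IsMorphism (M : SimplicialModel Agent Atom Vertex) (M' : SimplicialModel Agent Atom Vertex')
    (f : Vertex → Vertex') : Prop :=
  (∀ X ∈ M.simplices, X.image f ∈ M'.simplices) ∧
  (∀ v, M'.chi (f v) = M.chi v) ∧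
  (∀ v, M'.label (f v) = M.label v)

/-- Smart constructor for a simplicial model: the complex generated by a given
set of facets, each of which has `|Agent|` vertices with pairwise distinct colors. -/
def ofFacets [Nonempty Agent] (Fs : Set (Finset Vertex)) (chi : Vertex → Agent)
    (label : Vertex → Set Atom) (agentOf : Atom → Agent)
    (hcard : ∀ F ∈ Fs, F.card = Fintype.card Agent)
    (hinj : ∀ F ∈ Fs, Set.InjOn chi ↑F)
    (hlab : ∀ v, ∀ p ∈ label v, agentOf p = chi v) :
    SimplicialModel Agent Atom Vertex where
  simplices := {X | X.Nonempty ∧ ∃ F ∈ Fs, X ⊆ F}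
  chi := chi
  label := label
  agentOf := agentOf
  simplex_nonempty := fun _ hX => hX.1
  down_closed := by
    rintro X ⟨-, F, hF, hXF⟩ Y hYX hY
    exact ⟨hY, F, hF, hYX.trans hXF⟩
  chi_injOn := by
    rintro X ⟨-, F, hF, hXF⟩
    exact (hinj F hF).mono (Finset.coe_subset.mpr hXF)
  pure := by
    rintro X ⟨-, F, hF, hXF⟩
    refine ⟨F, ⟨?_, F, hF, subset_rfl⟩, hXF, hcard F hF⟩
    rw [← Finset.card_pos, hcard F hF]
    exact Fintype.card_pos
  label_agent := hlab

end SimplicialModel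

/-- The language `L_K⁺` of positive epistemic formulas:
`φ ::= p | ¬p | φ ∨ φ | φ ∧ φ | K_a φ`. -/
inductive PosFormula (Agent Atom : Type) : Type where
  | atom : Atom → PosFormula Agent Atom
  | natom : Atom → PosFormula Agent Atom
  | or : PosFormula Agent Atom → PosFormula Agent Atom → PosFormula Agent Atom
  | and : PosFormula Agent Atom → PosFormula Agent Atom → PosFormula Agent Atom
  | know : Agent → PosFormula Agent Atom → PosFormula Agent Atom

/-- The language `L_D⁺` of positive epistemic formulas with distributed knowledge:
`φ ::= p | ¬p | φ ∨ φ | φ ∧ φ | D_A φ`. -/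
inductive PosFormulaD (Agent Atom : Type) : Type where
  | atom : Atom → PosFormulaD Agent Atom
  | natom : Atom → PosFormulaD Agent Atom
  | or : PosFormulaD Agent Atom → PosFormulaD Agent Atom → PosFormulaD Agent Atom
  | and : PosFormulaD Agent Atom → PosFormulaD Agent Atom → PosFormulaD Agent Atom
  | dknow : Set Agent → PosFormulaD Agent Atom → PosFormulaD Agent Atom

namespace SimplicialModel

variable {Agent Atom Vertex Vertex' : Type} [Fintype Agent]
  [DecidableEq Vertex] [DecidableEq Vertex']

/-- Truth of a positive formula of `L_K⁺` at a facet of a simplicial model. -/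
def satK (M : SimplicialModel Agent Atom Vertex) :
    PosFormula Agent Atom → M.Facet → Prop
  | .atom p, X => p ∈ M.flabel X
  | .natom p, X => p ∉ M.flabel X
  | .or φ ψ, X => M.satK φ X ∨ M.satK ψ X
  | .and φ ψ, X => M.satK φ X ∧ M.satK ψ X
  | .know a φ, X => ∀ Y : M.Facet, M.indist a X Y → M.satK φ Y

/-- Truth of a positive formula of `L_D⁺` at a facet of a simplicial model. -/
def satD (M : SimplicialModel Agent Atom Vertex) :
    PosFormulaD Agent Atom → M.Facet → Prop
  | .atom p, X => p ∈ M.flabel X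
  | .natom p, X => p ∉ M.flabel X
  | .or φ ψ, X => M.satD φ X ∨ M.satD ψ X
  | .and φ ψ, X => M.satD φ X ∧ M.satD ψ X
  | .dknow A φ, X => ∀ Y : M.Facet, A ⊆ M.chiInter X Y → M.satD φ Y

/-- A K-simulation of `M` by `M'`: (Atom) related facets have the same labels;
(Forth) if `X R X'` and `X ∼ₐ Y` then there is `Y'` with `Y R Y'` and `X' ∼ₐ Y'`. -/
def IsKSimulation (M : SimplicialModel Agent Atom Vertex) (M' : SimplicialModel Agent Atom Vertex')
    (R : M.Facet → M'.Facet → Prop) : Prop :=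
  (∀ X X', R X X' → M.flabel X = M'.flabel X') ∧
  (∀ (a : Agent) X Y X', R X X' → M.indist a X Y →
    ∃ Y', R Y Y' ∧ M'.indist a X' Y')

/-- A D-simulation of `M` by `M'`: (Atom) related facets have the same labels;
(D-Forth) if `X R X'` then for every facet `Y` there is `Y'` with `Y R Y'` and
`χ(X ∩ Y) ⊆ χ'(X' ∩ Y')`. -/
def IsDSimulation (M : SimplicialModel Agent Atom Vertex) (M' : SimplicialModel Agent Atom Vertex')
    (R : M.Facet → M'.Facet → Prop) : Prop :=
  (∀ X X', R X X' → M.flabel X = M'.flabel X') ∧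
  (∀ X X', R X X' → ∀ Y, ∃ Y', R Y Y' ∧ M.chiInter X Y ⊆ M'.chiInter X' Y')

/-- A relation on facets is total if every facet of `M` is related to some facet of `M'`. -/
def TotalRel (M : SimplicialModel Agent Atom Vertex) (M' : SimplicialModel Agent Atom Vertex')
    (R : M.Facet → M'.Facet → Prop) : Prop :=
  ∀ X, ∃ X', R X X'

end SimplicialModel

/-- Modal depth of a formula of `L_K⁺`. -/
def PosFormula.deg {Agent Atom : Type} : PosFormula Agent Atom → ℕ
  | .atom _ => 0
  | .natom _ => 0
  | .or φ ψ => max φ.deg ψ.deg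
  | .and φ ψ => max φ.deg ψ.deg
  | .know _ φ => φ.deg + 1

/-- Modal depth of a formula of `L_D⁺`. -/
def PosFormulaD.deg {Agent Atom : Type} : PosFormulaD Agent Atom → ℕ
  | .atom _ => 0
  | .natom _ => 0
  | .or φ ψ => max φ.deg ψ.deg
  | .and φ ψ => max φ.deg ψ.deg
  | .dknow _ φ => φ.deg + 1

namespace SimplicialModel

variable {Agent Atom Vertex Vertex' : Type} [Fintype Agent]
  [DecidableEq Vertex] [DecidableEq Vertex']

/-- The condition (Atom): related facets carry the same labels. -/
def AtomCond (M : SimplicialModel Agent Atom Vertex) (M' : SimplicialModel Agent Atom Vertex')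
    (R : M.Facet → M'.Facet → Prop) : Prop :=
  ∀ X X', R X X' → M.flabel X = M'.flabel X'

/-- `n`-K-simulations, defined by induction on `n`. -/
def IsNKSimulation (M : SimplicialModel Agent Atom Vertex)
    (M' : SimplicialModel Agent Atom Vertex') :
    ℕ → (M.Facet → M'.Facet → Prop) → Prop
  | 0, R => AtomCond M M' R
  | n + 1, R => AtomCond M M' R ∧
      ∀ (a : Agent) X Y X', R X X' → M.indist a X Y →
        ∃ (R' : M.Facet → M'.Facet → Prop) (Y' : M'.Facet),
          IsNKSimulation M M' n R' ∧ R' Y Y' ∧ M'.indist a X' Y'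

/-- `n`-D-simulations, defined by induction on `n`. -/
def IsNDSimulation (M : SimplicialModel Agent Atom Vertex)
    (M' : SimplicialModel Agent Atom Vertex') :
    ℕ → (M.Facet → M'.Facet → Prop) → Prop
  | 0, R => AtomCond M M' R
  | n + 1, R =>
      ∀ X X', R X X' → ∀ Y : M.Facet,
        ∃ (R' : M.Facet → M'.Facet → Prop) (Y' : M'.Facet),
          IsNDSimulation M M' n R' ∧ R' Y Y' ∧ M.chiInter X Y ⊆ M'.chiInter X' Y'

/-- The operator `f^K` on relations between facets. -/
def fK (M : SimplicialModel Agent Atom Vertex) (M' : SimplicialModel Agent Atom Vertex')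
    (R : M.Facet → M'.Facet → Prop) : M.Facet → M'.Facet → Prop :=
  fun X X' => ∀ (a : Agent) (Y : M.Facet), M.indist a X Y →
    ∃ Y', R Y Y' ∧ M'.indist a X' Y'

/-- The operator `f^D` on relations between facets. -/
def fD (M : SimplicialModel Agent Atom Vertex) (M' : SimplicialModel Agent Atom Vertex')
    (R : M.Facet → M'.Facet → Prop) : M.Facet → M'.Facet → Prop :=
  fun X X' => ∀ Y : M.Facet, ∃ Y', R Y Y' ∧ M.chiInter X Y ⊆ M'.chiInter X' Y'

/-- The descending sequence `S^K_n`: `S^K_0 = {(X,X') : l(X) = l'(X')}` and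
`S^K_{n+1} = S^K_0 ∩ f^K(S^K_n)`. -/
def SK (M : SimplicialModel Agent Atom Vertex) (M' : SimplicialModel Agent Atom Vertex') :
    ℕ → M.Facet → M'.Facet → Prop
  | 0 => fun X X' => M.flabel X = M'.flabel X'
  | n + 1 => fun X X' => M.flabel X = M'.flabel X' ∧ fK M M' (SK M M' n) X X'

/-- The descending sequence `S^D_n`: `S^D_0 = {(X,X') : l(X) = l'(X')}` and
`S^D_{n+1} = f^D(S^D_n)`. -/
def SD (M : SimplicialModel Agent Atom Vertex) (M' : SimplicialModel Agent Atom Vertex') :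
    ℕ → M.Facet → M'.Facet → Prop
  | 0 => fun X X' => M.flabel X = M'.flabel X'
  | n + 1 => fD M M' (SD M M' n)

end SimplicialModel

attribute [local instance] Classical.propDecidable

namespace SimplicialModel

variable {Agent Atom Vertex : Type} [Fintype Agent] [DecidableEq Vertex]

noncomputable instance instFintypeFacet (M : SimplicialModel Agent Atom Vertex)
    [Finite Vertex] : Fintype M.Facet := by
  have : Fintype Vertex := Fintype.ofFinite _
  have : Finite (Finset Vertex) := inferInstance
  have : Finite M.Facet := by unfold Facet; exact Subtype.finite
  exact Fintype.ofFinite _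

/-- Disjunction of a finite list of formulas of `L_K⁺`; the empty disjunction
is represented by the unsatisfiable positive formula `p ∧ ¬p`. -/
noncomputable def bigOrK [Nonempty Atom] (l : List (PosFormula Agent Atom)) :
    PosFormula Agent Atom :=
  l.foldr .or
    ((PosFormula.atom (Classical.arbitrary Atom)).and
      (PosFormula.natom (Classical.arbitrary Atom)))

/-- Disjunction of a finite list of formulas of `L_D⁺`; the empty disjunction
is represented by the unsatisfiable positive formula `p ∧ ¬p`. -/
noncomputable def bigOrD [Nonempty Atom] (l : List (PosFormulaD Agent Atom)) :
    PosFormulaD Agent Atom :=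
  l.foldr .or
    ((PosFormulaD.atom (Classical.arbitrary Atom)).and
      (PosFormulaD.natom (Classical.arbitrary Atom)))

/-- `Φ^□(0, X) = ⋁_{p ∈ l(X)} ¬p ∨ ⋁_{p ∈ At ∖ l(X)} p` (as a formula of `L_K⁺`). -/
noncomputable def PhiK0 (M : SimplicialModel Agent Atom Vertex) [Fintype Atom] [Nonempty Atom]
    (X : M.Facet) : PosFormula Agent Atom :=
  (bigOrK (((Set.toFinite (M.flabel X)).toFinset.toList).map PosFormula.natom)).or
    (bigOrK (((Set.toFinite (M.flabel X)ᶜ).toFinset.toList).map PosFormula.atom))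

/-- `Φ^□(0, X) = ⋁_{p ∈ l(X)} ¬p ∨ ⋁_{p ∈ At ∖ l(X)} p` (as a formula of `L_D⁺`). -/
noncomputable def PhiD0 (M : SimplicialModel Agent Atom Vertex) [Fintype Atom] [Nonempty Atom]
    (X : M.Facet) : PosFormulaD Agent Atom :=
  (bigOrD (((Set.toFinite (M.flabel X)).toFinset.toList).map PosFormulaD.natom)).or
    (bigOrD (((Set.toFinite (M.flabel X)ᶜ).toFinset.toList).map PosFormulaD.atom))

/-- The characteristic formulas `Φ^K(n, X)`:
`Φ^K(n+1, X) = Φ^K(0, X) ∨ ⋁_{a ∈ Π} ⋁_{Y ∈ F(M), X ∼ₐ Y} K_a Φ^K(n, Y)`. -/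
noncomputable def PhiK (M : SimplicialModel Agent Atom Vertex)
    [Finite Vertex] [Fintype Atom] [Nonempty Atom] :
    ℕ → M.Facet → PosFormula Agent Atom
  | 0, X => PhiK0 M X
  | n + 1, X => (PhiK0 M X).or (bigOrK
      ((((Finset.univ : Finset (Agent × M.Facet)).filter
          (fun p => M.indist p.1 X p.2)).toList).map
        (fun p => PosFormula.know p.1 (PhiK M n p.2))))

/-- The characteristic formulas `Φ^D(n, X)`:
`Φ^D(n+1, X) = ⋁_{Y ∈ F(M)} D_{χ(X ∩ Y)} Φ^D(n, Y)`. -/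
noncomputable def PhiD (M : SimplicialModel Agent Atom Vertex)
    [Finite Vertex] [Fintype Atom] [Nonempty Atom] :
    ℕ → M.Facet → PosFormulaD Agent Atom
  | 0, X => PhiD0 M X
  | n + 1, X => bigOrD
      (((Finset.univ : Finset M.Facet).toList).map
        (fun Y => PosFormulaD.dknow (M.chiInter X Y) (PhiD M n Y)))

end SimplicialModel

namespace SimplicialModel

variable {Agent Atom Vertex : Type} [Fintype Agent]
  [DecidableEq Vertex]

lemma satK_bigOrK [Nonempty Atom] (M : SimplicialModel Agent Atom Vertex)
    (l : List (PosFormula Agent Atom)) (X : M.Facet) :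
    M.satK (bigOrK l) X ↔ ∃ φ ∈ l, M.satK φ X := by
  induction l with
  | nil =>
    simp only [bigOrK, List.foldr_nil, List.not_mem_nil, false_and, exists_false, iff_false]
    rintro ⟨h1, h2⟩; exact h2 h1
  | cons φ l ih =>
    simp only [bigOrK, List.foldr_cons] at *
    constructor
    · rintro (h | h)
      · exact ⟨φ, List.mem_cons_self, h⟩
      · obtain ⟨ψ, hψ, hs⟩ := ih.mp h
        exact ⟨ψ, List.mem_cons_of_mem _ hψ, hs⟩
    · rintro ⟨ψ, hψ, hs⟩
      rcases List.mem_cons.mp hψ with rfl | hψ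
      · exact Or.inl hs
      · exact Or.inr (ih.mpr ⟨ψ, hψ, hs⟩)

lemma satD_bigOrD [Nonempty Atom] (M : SimplicialModel Agent Atom Vertex)
    (l : List (PosFormulaD Agent Atom)) (X : M.Facet) :
    M.satD (bigOrD l) X ↔ ∃ φ ∈ l, M.satD φ X := by
  induction l with
  | nil =>
    simp only [bigOrD, List.foldr_nil, List.not_mem_nil, false_and, exists_false, iff_false]
    rintro ⟨h1, h2⟩; exact h2 h1
  | cons φ l ih =>
    simp only [bigOrD, List.foldr_cons] at *
    constructor
    · rintro (h | h)
      · exact ⟨φ, List.mem_cons_self, h⟩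
      · obtain ⟨ψ, hψ, hs⟩ := ih.mp h
        exact ⟨ψ, List.mem_cons_of_mem _ hψ, hs⟩
    · rintro ⟨ψ, hψ, hs⟩
      rcases List.mem_cons.mp hψ with rfl | hψ
      · exact Or.inl hs
      · exact Or.inr (ih.mpr ⟨ψ, hψ, hs⟩)

lemma not_satK_PhiK0 [Fintype Atom] [Nonempty Atom] (M : SimplicialModel Agent Atom Vertex)
    (X : M.Facet) : ¬ M.satK (PhiK0 M X) X := by
  rintro (h | h) <;> rw [satK_bigOrK] at h <;>
    obtain ⟨φ, hφ, hs⟩ := h <;>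
    obtain ⟨p, hp, rfl⟩ := List.mem_map.mp hφ <;>
    rw [Finset.mem_toList, Set.Finite.mem_toFinset] at hp
  · exact hs hp
  · exact hp hs

lemma not_satD_PhiD0 [Fintype Atom] [Nonempty Atom] (M : SimplicialModel Agent Atom Vertex)
    (X : M.Facet) : ¬ M.satD (PhiD0 M X) X := by
  rintro (h | h) <;> rw [satD_bigOrD] at h <;>
    obtain ⟨φ, hφ, hs⟩ := h <;>
    obtain ⟨p, hp, rfl⟩ := List.mem_map.mp hφ <;>
    rw [Finset.mem_toList, Set.Finite.mem_toFinset] at hp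
  · exact hs hp
  · exact hp hs

end SimplicialModel

open SimplicialModel in
/-- For each `□ ∈ {K, D}`, every finite simplicial model `M` over a finite set
of atomic propositions, every facet `X` of `M` and every `n ∈ ℕ`:
`M, X ⊭ Φ^□_M(n, X)`. -/
theorem not_sat_Phi_self
    {Agent Atom Vertex : Type} [Fintype Agent] [Nonempty Agent]
    [DecidableEq Vertex] [Finite Vertex] [Fintype Atom] [Nonempty Atom]
    (M : SimplicialModel Agent Atom Vertex) (n : ℕ) (X : M.Facet) :
    ¬ M.satK (PhiK M n X) X ∧ ¬ M.satD (PhiD M n X) X := by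
  induction n generalizing X with
  | zero => exact ⟨not_satK_PhiK0 M X, not_satD_PhiD0 M X⟩
  | succ n ih =>
    constructor
    · rintro (h | h)
      · exact not_satK_PhiK0 M X h
      · rw [satK_bigOrK] at h
        obtain ⟨φ, hφ, hs⟩ := h
        obtain ⟨⟨a, Y⟩, hp, rfl⟩ := List.mem_map.mp hφ
        rw [Finset.mem_toList, Finset.mem_filter] at hp
        exact (ih Y).1 (hs Y hp.2)
    · intro h
      rw [show PhiD M (n+1) X = bigOrD
          (((Finset.univ : Finset M.Facet).toList).map
            (fun Y => PosFormulaD.dknow (M.chiInter X Y) (PhiD M n Y))) from rfl,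
        satD_bigOrD] at h
      obtain ⟨φ, hφ, hs⟩ := h
      obtain ⟨Y, -, rfl⟩ := List.mem_map.mp hφ
      exact (ih Y).2 (hs Y subset_rfl)
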